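/- The generalized hypergeometric series ₃F₂(1, 3/2, 3; 21/8, 25/8; 1) equals (221/4096)·( 8 + 27·2^{1/4}·π + 54·2^{1/4}·arcoth(2^{1/4}) − 54·2^{1/4}·arctan(2^{1/4}) ). -/

import Mathlib

open Real MeasureTheory intervalIntegral Filter

noncomputable def poch (a : ℝ) (n : ℕ) : ℝ := Polynomial.eval a (ascPochhammer ℝ n)

noncomputable def arcoth (x : ℝ) : ℝ := (1/2) * Real.log ((x + 1)/(x - 1))


lemma poch_zero (a : ℝ) : poch a 0 = 1 := by simp [poch]

lemma poch_succ (a : ℝ) (n : ℕ) : poch a (n+1) = poch a n * (a + n) := by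
  simp [poch, ascPochhammer_succ_right]

lemma poch_pos {a : ℝ} (ha : 0 < a) (n : ℕ) : 0 < poch a n := by
  induction n with
  | zero => simp [poch_zero]
  | succ n ih => rw [poch_succ]; positivity

noncomputable def II (b : ℕ) : ℝ := ∫ u in (0:ℝ)..1, u^12 * (1-u^4)^b

lemma II_one : II 1 = 4/221 := by
  have : II 1 = ∫ u in (0:ℝ)..1, (u^12 - u^16) := by
    unfold II; congr 1; ext u; ring
  rw [this, intervalIntegral.integral_sub (Continuous.intervalIntegrable (by fun_prop) _ _) (Continuous.intervalIntegrable (by fun_prop) _ _)]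
  simp [integral_pow]
  norm_num

lemma II_rec (b : ℕ) : (4*(b:ℝ)+17) * II (b+1) = (4*(b:ℝ)+4) * II b := by
  have key : ∫ u in (0:ℝ)..1, ((4*(b:ℝ)+17) * (u^12 * (1-u^4)^(b+1)) - (4*(b:ℝ)+4) * (u^12 * (1-u^4)^b)) = 0 := by
    have hderiv : ∀ u ∈ Set.uIcc (0:ℝ) 1, HasDerivAt (fun v : ℝ => v^13 * (1-v^4)^(b+1))
        ((4*(b:ℝ)+17) * (u^12 * (1-u^4)^(b+1)) - (4*(b:ℝ)+4) * (u^12 * (1-u^4)^b)) u := by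
      intro u _
      have h1 : HasDerivAt (fun v : ℝ => v^13) (13*u^12) u := by
        simpa using (hasDerivAt_pow 13 u)
      have h2 : HasDerivAt (fun v : ℝ => (1-v^4)^(b+1))
          (((b:ℝ)+1) * (1-u^4)^b * (-(4*u^3))) u := by
        have hin : HasDerivAt (fun v : ℝ => 1-v^4) (-(4*u^3)) u := by
          simpa using ((hasDerivAt_pow 4 u).const_sub 1)
        have := (hasDerivAt_pow (b+1) (1-u^4)).comp u hin
        simpa [Function.comp_def, mul_comm, mul_assoc, mul_left_comm] using this
      have := h1.mul h2
      refine this.congr_deriv ?_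
      ring
    have hcont : IntervalIntegrable (fun u : ℝ => (4*(b:ℝ)+17) * (u^12 * (1-u^4)^(b+1)) - (4*(b:ℝ)+4) * (u^12 * (1-u^4)^b)) volume 0 1 := by
      apply Continuous.intervalIntegrable; fun_prop
    rw [intervalIntegral.integral_eq_sub_of_hasDerivAt hderiv hcont]
    norm_num
  rw [intervalIntegral.integral_sub (by apply Continuous.intervalIntegrable; fun_prop)
    (by apply Continuous.intervalIntegrable; fun_prop)] at key
  rw [intervalIntegral.integral_const_mul, intervalIntegral.integral_const_mul] at key
  unfold II
  linarith

lemma geom2 {x : ℝ} (h0 : 0 ≤ x) (h1 : x < 1) :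
    HasSum (fun n : ℕ => ((n:ℝ)+1)*((n:ℝ)+2)*x^n) (2/(1-x)^3) := by
  have hx : ‖x‖ < 1 := by rw [Real.norm_eq_abs, abs_of_nonneg h0]; exact h1
  have s0 : Summable (fun n : ℕ => x^n) := summable_geometric_of_lt_one h0 h1
  have s1 : Summable (fun n : ℕ => (n:ℝ)^1 * x^n) := summable_pow_mul_geometric_of_norm_lt_one 1 hx
  have s2 : Summable (fun n : ℕ => (n:ℝ)^2 * x^n) := summable_pow_mul_geometric_of_norm_lt_one 2 hx
  have hsum : Summable (fun n : ℕ => ((n:ℝ)+1)*((n:ℝ)+2)*x^n) := by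
    have := (s2.add (s1.mul_left 3)).add (s0.mul_left 2)
    apply this.congr
    intro n; ring
  -- partial sums closed form
  have hden : (1-x)^3 ≠ 0 := by
    have : (0:ℝ) < 1 - x := by linarith
    positivity
  have partial_eq : ∀ N : ℕ, (∑ n ∈ Finset.range N, ((n:ℝ)+1)*((n:ℝ)+2)*x^n)
      = (2 - x^N * (((N:ℝ)+1)*((N:ℝ)+2) - 2*(N:ℝ)*((N:ℝ)+2)*x + (N:ℝ)*((N:ℝ)+1)*x^2))/(1-x)^3 := by
    intro N
    rw [eq_div_iff hden]
    induction N with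
    | zero => simp
    | succ N ihN =>
      rw [Finset.sum_range_succ, add_mul, ihN]
      push_cast
      ring
  -- error term tends to 0
  have herr : Tendsto (fun N : ℕ => x^N * (((N:ℝ)+1)*((N:ℝ)+2) - 2*(N:ℝ)*((N:ℝ)+2)*x + (N:ℝ)*((N:ℝ)+1)*x^2)) atTop (nhds 0) := by
    apply Summable.tendsto_atTop_zero
    have := (s2.mul_left (1 - 2*x + x^2)).add ((s1.mul_left (3 - 4*x + x^2)).add (s0.mul_left 2))
    apply this.congr
    intro n; ring
  have htend : Tendsto (fun N : ℕ => ∑ n ∈ Finset.range N, ((n:ℝ)+1)*((n:ℝ)+2)*x^n) atTop (nhds (2/(1-x)^3)) := by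
    simp only [partial_eq, div_eq_mul_inv]
    have : Tendsto (fun N : ℕ => (2 - x^N * (((N:ℝ)+1)*((N:ℝ)+2) - 2*(N:ℝ)*((N:ℝ)+2)*x + (N:ℝ)*((N:ℝ)+1)*x^2))) atTop (nhds 2) := by
      simpa using (tendsto_const_nhds (x := (2:ℝ)) (f := atTop)).sub herr
    exact this.mul_const _
  have := hsum.hasSum
  rwa [tendsto_nhds_unique this.tendsto_sum_nat htend] at this

noncomputable def T (n : ℕ) : ℝ :=
  (poch 1 n * poch (3/2) n * poch 3 n) / (poch (21/8) n * poch (25/8) n * (Nat.factorial n : ℝ))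

lemma T_eq (n : ℕ) : T n = 221/8 * (((n:ℝ)+1)*((n:ℝ)+2)) * II (2*n+1) := by
  induction n with
  | zero =>
    simp [T, poch_zero, II_one]
    norm_num
  | succ n ih =>
    have h1 := II_rec (2*n+1)
    have h2 := II_rec (2*n+2)
    push_cast at h1 h2
    have e1 : 2*n+1+1 = 2*n+2 := by ring
    have e2 : 2*n+2+1 = 2*n+3 := by ring
    rw [e1] at h1; rw [e2] at h2
    have h3 : (8*(n:ℝ)+21)*(8*(n:ℝ)+25) * II (2*n+3) = (8*(n:ℝ)+8)*(8*(n:ℝ)+12) * II (2*n+1) := by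
      nlinarith [h1, h2]
    have hp1 := poch_pos (show (0:ℝ) < 21/8 by norm_num) n
    have hp2 := poch_pos (show (0:ℝ) < 25/8 by norm_num) n
    have hp3 : (0:ℝ) < (Nat.factorial n : ℝ) := Nat.cast_pos.2 (Nat.factorial_pos n)
    have hT : T (n+1) * ((21/8 + (n:ℝ)) * (25/8 + (n:ℝ)) * ((n:ℝ)+1)) = T n * ((1+(n:ℝ)) * (3/2+(n:ℝ)) * (3+(n:ℝ))) := by
      unfold T
      rw [poch_succ, poch_succ, poch_succ, poch_succ, poch_succ, Nat.factorial_succ]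
      push_cast
      field_simp
    have hC : ((21/8 + (n:ℝ)) * (25/8 + (n:ℝ)) * ((n:ℝ)+1)) ≠ 0 := by positivity
    apply mul_right_cancel₀ hC
    rw [hT, ih]
    have e3 : 2*(n+1)+1 = 2*n+3 := by ring
    rw [e3]
    push_cast
    linear_combination (-(221/512) * ((n:ℝ)+1) * ((n:ℝ)+2) * ((n:ℝ)+3)) * h3

noncomputable def aa : ℝ := (2:ℝ) ^ ((1:ℝ)/4)

lemma aa_pos : 0 < aa := Real.rpow_pos_of_pos two_pos _
lemma aa_gt_one : 1 < aa := by
  rw [aa]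
  apply Real.one_lt_rpow_iff_of_pos two_pos |>.mpr
  exact Or.inl ⟨one_lt_two, by norm_num⟩
lemma aa_pow4 : aa^4 = 2 := by
  rw [aa, ← Real.rpow_natCast ((2:ℝ)^((1:ℝ)/4)) 4, ← Real.rpow_mul (by norm_num)]
  norm_num

noncomputable def FF (u : ℝ) : ℝ :=
  (5/64*u - 9/128*u^5)/(2-u^4)^2
    + 27*aa/512 * (Real.arctan (u/aa) + (1/2)*(Real.log (aa+u) - Real.log (aa-u)))

lemma FF_deriv {u : ℝ} (hu : u ∈ Set.uIcc (0:ℝ) 1) :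
    HasDerivAt FF ((1-u^4)/(2-u^4)^3) u := by
  rw [Set.uIcc_of_le (by norm_num : (0:ℝ) ≤ 1)] at hu
  obtain ⟨hu0, hu1⟩ := hu
  have ha1 := aa_gt_one
  have hap := aa_pos
  have ha4 := aa_pow4
  have hden : (0:ℝ) < 2 - u^4 := by nlinarith [pow_le_one₀ hu0 hu1 (n := 4)]
  have hau1 : (0:ℝ) < aa + u := by linarith
  have hau2 : (0:ℝ) < aa - u := by linarith
  -- rational part
  have hnum : HasDerivAt (fun v : ℝ => 5/64*v - 9/128*v^5) (5/64 - 45/128*u^4) u := by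
    have := ((hasDerivAt_id u).const_mul (5/64:ℝ)).sub ((hasDerivAt_pow 5 u).const_mul (9/128:ℝ))
    refine this.congr_deriv ?_
    push_cast; ring
  have hden' : HasDerivAt (fun v : ℝ => (2-v^4)^2) (2*(2-u^4)*(-(4*u^3))) u := by
    have hin : HasDerivAt (fun v : ℝ => 2-v^4) (-(4*u^3)) u := by
      simpa using ((hasDerivAt_pow 4 u).const_sub 2)
    have := (hasDerivAt_pow 2 (2-u^4)).comp u hin
    simpa [Function.comp_def, mul_comm, mul_assoc, mul_left_comm] using this
  have hrat : HasDerivAt (fun v : ℝ => (5/64*v - 9/128*v^5)/(2-v^4)^2)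
      (((5/64 - 45/128*u^4)*(2-u^4)^2 - (5/64*u - 9/128*u^5)*(2*(2-u^4)*(-(4*u^3))))/((2-u^4)^2)^2) u :=
    hnum.div hden' (by positivity)
  -- arctan part
  have harc : HasDerivAt (fun v : ℝ => Real.arctan (v/aa)) (1/(1+(u/aa)^2) * (1/aa)) u := by
    have := (Real.hasDerivAt_arctan (u/aa)).comp u ((hasDerivAt_id u).div_const aa)
    simpa [one_div, Function.comp_def] using this
  -- log parts
  have hlog1 : HasDerivAt (fun v : ℝ => Real.log (aa+v)) (1/(aa+u)) u := by
    have := (Real.hasDerivAt_log (ne_of_gt hau1)).comp u ((hasDerivAt_id u).const_add aa)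
    simpa [one_div, Function.comp_def] using this
  have hlog2 : HasDerivAt (fun v : ℝ => Real.log (aa-v)) (-(1/(aa-u))) u := by
    have := (Real.hasDerivAt_log (ne_of_gt hau2)).comp u ((hasDerivAt_id u).const_sub aa)
    simp only [Function.comp_def] at this
    have h2 : (aa-u)⁻¹ * (-1) = -(1/(aa-u)) := by ring
    rw [h2] at this
    exact this
  have htrans : HasDerivAt (fun v : ℝ => Real.arctan (v/aa) + (1/2)*(Real.log (aa+v) - Real.log (aa-v)))
      (1/(1+(u/aa)^2) * (1/aa) + (1/2)*(1/(aa+u) - -(1/(aa-u)))) u :=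
    harc.add ((hlog1.sub hlog2).const_mul (1/2))
  have htrans_val : 1/(1+(u/aa)^2) * (1/aa) + (1/2)*(1/(aa+u) - -(1/(aa-u))) = 2*aa^3/(aa^4-u^4) := by
    have h2 : (0:ℝ) < 1+(u/aa)^2 := by positivity
    have hne : aa^4 - u^4 ≠ 0 := by rw [ha4]; positivity
    field_simp
    ring
  rw [htrans_val, ha4] at htrans
  have hfull := hrat.add (htrans.const_mul (27*aa/512))
  refine hfull.congr_deriv ?_
  have haux : 27*aa/512 * (2*aa^3/(2-u^4)) = 27/(128*(2-u^4)) := by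
    have : aa*aa^3 = 2 := by rw [← ha4]; ring
    field_simp
    nlinarith [this]
  rw [haux]
  field_simp
  ring

lemma integral_gg : (∫ u in (0:ℝ)..1, 2*(1-u^4)/(2-u^4)^3)
    = 1/64 + 27*aa/256 * (π/2 - Real.arctan aa + (1/2)*(Real.log (aa+1) - Real.log (aa-1))) := by
  have hcont : ∀ u ∈ Set.uIcc (0:ℝ) 1, (0:ℝ) < 2 - u^4 := by
    intro u hu
    rw [Set.uIcc_of_le (by norm_num : (0:ℝ) ≤ 1)] at hu
    nlinarith [pow_le_one₀ hu.1 hu.2 (n := 4)]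
  have hInt : IntervalIntegrable (fun u : ℝ => (1-u^4)/(2-u^4)^3) volume 0 1 := by
    apply ContinuousOn.intervalIntegrable
    apply ContinuousOn.div (by fun_prop) (by fun_prop)
    intro u hu
    have := hcont u hu
    positivity
  have key := intervalIntegral.integral_eq_sub_of_hasDerivAt (fun u hu => FF_deriv hu) hInt
  have h2 : (∫ u in (0:ℝ)..1, 2*(1-u^4)/(2-u^4)^3) = 2 * ∫ u in (0:ℝ)..1, (1-u^4)/(2-u^4)^3 := by
    rw [← intervalIntegral.integral_const_mul]
    congr 1; ext u; ring
  rw [h2, key]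
  have ha1 := aa_gt_one
  have hF0 : FF 0 = 0 := by simp [FF]
  have hF1 : FF 1 = 1/128 + 27*aa/512 * (π/2 - Real.arctan aa + (1/2)*(Real.log (aa+1) - Real.log (aa-1))) := by
    rw [FF]
    rw [show (1:ℝ)/aa = aa⁻¹ by ring, Real.arctan_inv_of_pos (by linarith)]
    norm_num
  rw [hF0, hF1]
  ring

noncomputable def gg (t : ℝ) : ℝ := 2*(1-t^4)/(2-t^4)^3

lemma Fn_nonneg {n : ℕ} {t : ℝ} (h0 : 0 ≤ t) (h1 : t ≤ 1) :
    0 ≤ ((n:ℝ)+1)*((n:ℝ)+2)*t^12*(1-t^4)^(2*n+1) := by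
  have h : 0 ≤ 1 - t^4 := by nlinarith [pow_le_one₀ h0 h1 (n := 4)]
  have : (0:ℝ) ≤ (n:ℝ)+1 := by positivity
  have : (0:ℝ) ≤ (n:ℝ)+2 := by positivity
  positivity

lemma Fn_hasSum {t : ℝ} (ht : t ∈ Set.Ioc (0:ℝ) 1) :
    HasSum (fun n : ℕ => ((n:ℝ)+1)*((n:ℝ)+2)*t^12*(1-t^4)^(2*n+1)) (gg t) := by
  obtain ⟨ht0, ht1⟩ := ht
  have h4 : 0 < t^4 := by positivity
  have h41 : t^4 ≤ 1 := pow_le_one₀ ht0.le ht1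
  have hq0 : 0 ≤ 1 - t^4 := by linarith
  have hq1 : 1 - t^4 < 1 := by linarith
  have hx0 : 0 ≤ (1-t^4)^2 := sq_nonneg _
  have hx1 : (1-t^4)^2 < 1 := by nlinarith
  have hs := (geom2 hx0 hx1).mul_left (t^12*(1-t^4))
  have hfun : (fun n : ℕ => t^12*(1-t^4) * (((n:ℝ)+1)*((n:ℝ)+2)*((1-t^4)^2)^n))
      = (fun n : ℕ => ((n:ℝ)+1)*((n:ℝ)+2)*t^12*(1-t^4)^(2*n+1)) := by
    funext n
    rw [← pow_mul]
    ring
  rw [hfun] at hs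
  suffices hgg : gg t = t^12*(1-t^4) * (2/(1-(1-t^4)^2)^3) by rw [hgg]; exact hs
  have h1 : 1-((1-t^4)^2) = t^4*(2-t^4) := by ring
  have hne1 : t^4 ≠ 0 := ne_of_gt h4
  have hne2 : (2:ℝ)-t^4 ≠ 0 := by nlinarith
  rw [gg, h1, mul_pow]
  field_simp

lemma hasSum_T : HasSum T (221/8 * ∫ u in (0:ℝ)..1, gg u) := by
  have key : HasSum (fun n : ℕ => ∫ t in (0:ℝ)..1, ((n:ℝ)+1)*((n:ℝ)+2)*t^12*(1-t^4)^(2*n+1))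
      (∫ t in (0:ℝ)..1, gg t) := by
    refine intervalIntegral.hasSum_integral_of_dominated_convergence
      (fun n t => ((n:ℝ)+1)*((n:ℝ)+2)*t^12*(1-t^4)^(2*n+1)) ?_ ?_ ?_ ?_ ?_
    · intro n
      exact (Continuous.aestronglyMeasurable (by fun_prop))
    · intro n
      apply ae_of_all
      intro t ht
      rw [Set.uIoc_of_le (by norm_num : (0:ℝ) ≤ 1)] at ht
      rw [Real.norm_eq_abs, abs_of_nonneg (Fn_nonneg ht.1.le ht.2)]
    · apply ae_of_all
      intro t ht
      rw [Set.uIoc_of_le (by norm_num : (0:ℝ) ≤ 1)] at ht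
      exact (Fn_hasSum ht).summable
    · rw [intervalIntegrable_iff, Set.uIoc_of_le (by norm_num : (0:ℝ) ≤ 1)]
      have hgg : IntegrableOn gg (Set.Ioc (0:ℝ) 1) volume := by
        apply IntegrableOn.mono_set (t := Set.Icc (0:ℝ) 1) _ Set.Ioc_subset_Icc_self
        apply ContinuousOn.integrableOn_Icc
        apply ContinuousOn.div (by fun_prop) (by fun_prop)
        intro t ht
        have h4 : t^4 ≤ 1 := pow_le_one₀ ht.1 ht.2
        have h5 : (0:ℝ) < 2 - t^4 := by nlinarith
        positivity
      apply hgg.congr_fun _ measurableSet_Ioc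
      intro t ht
      exact ((Fn_hasSum ht).tsum_eq).symm
    · apply ae_of_all
      intro t ht
      rw [Set.uIoc_of_le (by norm_num : (0:ℝ) ≤ 1)] at ht
      exact Fn_hasSum ht
  have hint : ∀ n : ℕ, (∫ t in (0:ℝ)..1, ((n:ℝ)+1)*((n:ℝ)+2)*t^12*(1-t^4)^(2*n+1))
      = (((n:ℝ)+1)*((n:ℝ)+2)) * II (2*n+1) := by
    intro n
    rw [II, ← intervalIntegral.integral_const_mul]
    congr 1; ext t; ring
  simp only [hint] at key
  have h := key.mul_left (221/8)
  have hfun : (fun n : ℕ => (221:ℝ)/8 * ((((n:ℝ)+1)*((n:ℝ)+2)) * II (2*n+1))) = T := by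
    funext n
    rw [T_eq n]
    ring
  rwa [hfun] at h

theorem stmt_16 :
    ∑' n : ℕ, (poch (1) n * poch (3/2) n * poch (3) n) / (poch (21/8) n * poch (25/8) n * (Nat.factorial n : ℝ)) * (1 : ℝ) ^ n
      = 221/4096 * (8 + 27 * (2:ℝ) ^ ((1:ℝ)/4) * Real.pi
          + 54 * (2:ℝ) ^ ((1:ℝ)/4) * arcoth ((2:ℝ) ^ ((1:ℝ)/4))
          - 54 * (2:ℝ) ^ ((1:ℝ)/4) * Real.arctan ((2:ℝ) ^ ((1:ℝ)/4))) := by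
  have h1 : ∀ n : ℕ, (poch (1) n * poch (3/2) n * poch (3) n) / (poch (21/8) n * poch (25/8) n * (Nat.factorial n : ℝ)) * (1 : ℝ) ^ n = T n := by
    intro n; rw [one_pow, mul_one]; rfl
  simp only [h1]
  rw [hasSum_T.tsum_eq]
  have h2 : arcoth aa = (1/2)*(Real.log (aa+1) - Real.log (aa-1)) := by
    rw [arcoth, Real.log_div (by nlinarith [aa_gt_one]) (by
      have := aa_gt_one
      intro hc
      nlinarith [hc])]
  have h3 : (∫ u in (0:ℝ)..1, gg u) = ∫ u in (0:ℝ)..1, 2*(1-u^4)/(2-u^4)^3 := rfl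
  rw [h3, integral_gg, show (2:ℝ)^((1:ℝ)/4) = aa from rfl, h2]
  ring
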